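/- Let A and B be finite sequences of reals and δ > 0. Every δ-almost increasing common subsequence S of A and B can be split as S = S' ∘ S'' where, for any fixed split point of A into A[1..i] and A[i+1..n], there exists j with 0 ≤ j ≤ m such that S' is a δ-almost increasing common subsequence of A[1..i] and B[1..j], S'' is a δ-almost increasing common subsequence of A[i+1..n] and B[j+1..m], and (max of S') < (min of S'') + δ whenever both parts are nonempty. -/

import Mathlib

open List

def DeltaAlmostIncreasing (δ : ℝ) (l : List ℝ) : Prop :=
  l.Pairwise fun a b => b + δ > a

/-- every δ-almost increasing common subsequence S of A and B splits as
S = S' ++ S'' across any fixed split A = A[1..i] ∘ A[i+1..n], for some 0 ≤ j ≤ m,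
with S' a δ-a.i. common subsequence of A[1..i], B[1..j], S'' one of A[i+1..n], B[j+1..m],
and max S' < min S'' + δ when both are nonempty. -/
theorem stmt_7 (δ : ℝ) (hδ : 0 < δ) (A B S : List ℝ)
    (hSA : S <+ A) (hSB : S <+ B) (hS : DeltaAlmostIncreasing δ S)
    (i : ℕ) (hi : i ≤ A.length) :
    ∃ j ≤ B.length, ∃ S' S'' : List ℝ,
      S = S' ++ S'' ∧
      S' <+ A.take i ∧ S' <+ B.take j ∧ DeltaAlmostIncreasing δ S' ∧
      S'' <+ A.drop i ∧ S'' <+ B.drop j ∧ DeltaAlmostIncreasing δ S'' ∧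
      (S' ≠ [] → S'' ≠ [] → WithBot.unbotD 0 S'.maximum < WithTop.untopD 0 S''.minimum + δ) := by
  have hA : S <+ A.take i ++ A.drop i := by rwa [List.take_append_drop]
  obtain ⟨S', S'', hsplit, h1, h2⟩ := List.sublist_append_iff.mp hA
  subst hsplit
  obtain ⟨B1, B2, hB, hb1, hb2⟩ := List.append_sublist_iff.mp hSB
  refine ⟨B1.length, ?_, S', S'', rfl, h1, ?_, ?_, h2, ?_, ?_, ?_⟩
  · rw [hB]; simp
  · rw [hB, List.take_left]; exact hb1
  · exact (List.pairwise_append.mp hS).1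
  · rw [hB, List.drop_left]; exact hb2
  · exact (List.pairwise_append.mp hS).2.1
  · intro h1n h2n
    obtain ⟨x, hx⟩ : ∃ x : ℝ, S'.maximum = x := by
      cases hmx : S'.maximum with
      | bot => exact absurd hmx (List.maximum_ne_bot_of_ne_nil h1n)
      | coe x => exact ⟨x, rfl⟩
    obtain ⟨y, hy⟩ : ∃ y : ℝ, S''.minimum = y := by
      cases hmy : S''.minimum with
      | top => exact absurd hmy (List.minimum_ne_top_of_ne_nil h2n)
      | coe y => exact ⟨y, rfl⟩
    rw [hx, hy]
    simp only [WithBot.unbotD_coe, WithTop.untopD_coe]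
    exact (List.pairwise_append.mp hS).2.2 x (List.maximum_mem hx) y (List.minimum_mem hy)
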